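/- Let ℓ ≥ 1, let λ be a partition, and let λ^c be an ℓ-core of λ, i.e. a partition obtained from λ by successively removing rim hooks of length ℓ until no rim hook of length ℓ can be removed. Set w = (|λ| − |λ^c|)/ℓ. Then in the polynomial ring (ℤ/ℓℤ)[X] one has c_λ(X) = c_{λ^c}(X)·∏_{p=0}^{ℓ−1}(X+p)^{w}; equivalently, the multiset of residues mod ℓ of the contents of the cells of λ equals the corresponding multiset for λ^c together with w full copies of ℤ/ℓℤ. -/

import Mathlib

/- Statement 14: the content polynomial identity `c_λ(X) = c_{λ^c}(X)·∏_{p=0}^{ℓ-1}(X+p)^w`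
in `(ℤ/ℓℤ)[X]`, where `λ^c` is an `ℓ`-core of `λ` and `w = (|λ| - |λ^c|)/ℓ`. -/

/-- Two cells are edgewise adjacent. -/
def CellAdj (c d : ℕ × ℕ) : Prop :=
  (c.1 = d.1 ∧ (c.2 + 1 = d.2 ∨ d.2 + 1 = c.2)) ∨
  (c.2 = d.2 ∧ (c.1 + 1 = d.1 ∨ d.1 + 1 = c.1))

/-- A finite set of cells is edgewise connected. -/
def EdgeConnected (S : Finset (ℕ × ℕ)) : Prop :=
  ∀ c ∈ S, ∀ d ∈ S,
    Relation.ReflTransGen (fun x y => x ∈ S ∧ y ∈ S ∧ CellAdj x y) c d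

/-- `ν` is obtained from `μ` by removing a rim hook of length `ℓ`: the skew diagram
`μ/ν` has `ℓ` cells, is edgewise connected, and contains no `2×2` block of cells. -/
def IsRimHookRemoval (ℓ : ℕ) (μ ν : YoungDiagram) : Prop :=
  ν ≤ μ ∧ (μ.cells \ ν.cells).card = ℓ ∧ EdgeConnected (μ.cells \ ν.cells) ∧
  ¬∃ i j : ℕ, (i, j) ∈ μ.cells \ ν.cells ∧ (i + 1, j) ∈ μ.cells \ ν.cells ∧
    (i, j + 1) ∈ μ.cells \ ν.cells ∧ (i + 1, j + 1) ∈ μ.cells \ ν.cells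

/-- `lamc` is an `ℓ`-core of `lam`: obtained from `lam` by successively removing rim
hooks of length `ℓ`, until no rim hook of length `ℓ` can be removed. -/
def IsLCore (ℓ : ℕ) (lam lamc : YoungDiagram) : Prop :=
  Relation.ReflTransGen (IsRimHookRemoval ℓ) lam lamc ∧
  ¬∃ ν : YoungDiagram, IsRimHookRemoval ℓ lamc ν

/-- The content polynomial `c_λ(X) = ∏_{(i,j) ∈ λ} (X + j - i)`, with coefficients
taken in `ℤ/ℓℤ` (cells are `0`-indexed, which does not change the contents `j - i`). -/
noncomputable def contentPoly (ℓ : ℕ) (lam : YoungDiagram) : Polynomial (ZMod ℓ) :=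
  ∏ c ∈ lam.cells, (Polynomial.X + Polynomial.C ((c.2 : ZMod ℓ) - (c.1 : ZMod ℓ)))

/-- The content of a cell, as an integer. -/
def cellCont (c : ℕ × ℕ) : ℤ := (c.2 : ℤ) - (c.1 : ℤ)

/-- Contents are injective on a skew diagram with no 2×2 block. -/
lemma cont_inj {μ ν : YoungDiagram} (_hle : ν ≤ μ)
    (h22 : ¬∃ i j : ℕ, (i, j) ∈ μ.cells \ ν.cells ∧ (i + 1, j) ∈ μ.cells \ ν.cells ∧
      (i, j + 1) ∈ μ.cells \ ν.cells ∧ (i + 1, j + 1) ∈ μ.cells \ ν.cells)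
    {c d : ℕ × ℕ} (hc : c ∈ μ.cells \ ν.cells) (hd : d ∈ μ.cells \ ν.cells)
    (hcd : cellCont c = cellCont d) : c = d := by
  obtain ⟨i, j⟩ := c
  obtain ⟨i', j'⟩ := d
  unfold cellCont at hcd
  simp only at hcd
  -- wlog i ≤ i'
  rcases lt_trichotomy i i' with h | h | h
  · exfalso
    apply h22
    refine ⟨i, j, hc, ?_, ?_, ?_⟩ <;>
    · rw [Finset.mem_sdiff] at hd hc ⊢
      constructor
      · rw [YoungDiagram.mem_cells] at hd ⊢
        exact μ.up_left_mem (by omega) (by omega) hd.1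
      · intro hmem
        exact hc.2 (ν.up_left_mem (by omega) (by omega) hmem)
  · have : j = j' := by omega
    simp [h, this]
  · exfalso
    apply h22
    refine ⟨i', j', hd, ?_, ?_, ?_⟩ <;>
    · rw [Finset.mem_sdiff] at hd hc ⊢
      constructor
      · rw [YoungDiagram.mem_cells] at hc ⊢
        exact μ.up_left_mem (by omega) (by omega) hc.1
      · intro hmem
        exact hd.2 (ν.up_left_mem (by omega) (by omega) hmem)

/-- Along a connected set, all intermediate contents are attained. -/
lemma cont_between {S : Finset (ℕ × ℕ)} {c d : ℕ × ℕ} (hc : c ∈ S)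
    (h : Relation.ReflTransGen (fun x y => x ∈ S ∧ y ∈ S ∧ CellAdj x y) c d) :
    ∀ z : ℤ, min (cellCont c) (cellCont d) ≤ z → z ≤ max (cellCont c) (cellCont d) →
      ∃ e ∈ S, cellCont e = z := by
  induction h with
  | refl =>
    intro z h1 h2
    exact ⟨c, hc, by omega⟩
  | @tail b e hcb hstep ih =>
    obtain ⟨hb, he, hadj⟩ := hstep
    have hdiff : cellCont e = cellCont b + 1 ∨ cellCont b = cellCont e + 1 := by
      unfold cellCont
      rcases hadj with ⟨h1, h2 | h2⟩ | ⟨h1, h2 | h2⟩ <;> omega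
    intro z h1 h2
    rcases (by omega : z = cellCont e ∨
        (min (cellCont c) (cellCont b) ≤ z ∧ z ≤ max (cellCont c) (cellCont b))) with h | h
    · exact ⟨e, he, h.symm⟩
    · exact ih z h.1 h.2

/-- Products over `range ℓ` of a `ZMod ℓ`-indexed function equal products over all of `ZMod ℓ`. -/
lemma prod_range_cast {ℓ : ℕ} [NeZero ℓ] {M : Type*} [CommMonoid M] (f : ZMod ℓ → M) :
    ∏ p ∈ Finset.range ℓ, f (p : ZMod ℓ) = ∏ z : ZMod ℓ, f z := by
  refine Finset.prod_nbij' (fun p => (p : ZMod ℓ)) (fun z => z.val) ?_ ?_ ?_ ?_ ?_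
  · intro a _; exact Finset.mem_univ _
  · intro z _; exact Finset.mem_range.mpr (ZMod.val_lt z)
  · intro a ha; exact ZMod.val_cast_of_lt (Finset.mem_range.mp ha)
  · intro z _; exact ZMod.natCast_rightInverse z
  · intro a _; rfl

lemma prod_range_translate {ℓ : ℕ} [NeZero ℓ] {M : Type*} [CommMonoid M]
    (a : ZMod ℓ) (f : ZMod ℓ → M) :
    ∏ p ∈ Finset.range ℓ, f (a + (p : ZMod ℓ)) = ∏ p ∈ Finset.range ℓ, f (p : ZMod ℓ) := by
  rw [prod_range_cast (fun z => f (a + z)), prod_range_cast f]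
  exact Fintype.prod_equiv (Equiv.addLeft a) _ f (fun x => rfl)

/-- Single rim-hook removal step. -/
lemma rimhook_step {ℓ : ℕ} (hℓ : 1 ≤ ℓ) {μ ν : YoungDiagram}
    (h : IsRimHookRemoval ℓ μ ν) :
    μ.card = ν.card + ℓ ∧
    contentPoly ℓ μ = contentPoly ℓ ν *
      ∏ p ∈ Finset.range ℓ, (Polynomial.X + Polynomial.C ((p : ZMod ℓ))) := by
  haveI : NeZero ℓ := ⟨by omega⟩
  obtain ⟨hle, hcard, hconn, h22⟩ := h
  have hsub : ν.cells ⊆ μ.cells := hle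
  set S := μ.cells \ ν.cells with hS
  constructor
  · have h3 : S.card + ν.cells.card = μ.cells.card :=
      Finset.card_sdiff_add_card_eq_card hsub
    show μ.cells.card = ν.cells.card + ℓ
    omega
  -- the polynomial identity
  have hsplit : contentPoly ℓ μ = (∏ c ∈ S, (Polynomial.X +
      Polynomial.C ((c.2 : ZMod ℓ) - (c.1 : ZMod ℓ)))) * contentPoly ℓ ν := by
    rw [contentPoly, contentPoly, ← Finset.prod_sdiff hsub]
  rw [hsplit, mul_comm]
  congr 1
  -- rewrite factors using cellCont
  have hfac : ∀ c ∈ S, Polynomial.X + Polynomial.C ((c.2 : ZMod ℓ) - (c.1 : ZMod ℓ)) =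
      Polynomial.X + Polynomial.C ((cellCont c : ℤ) : ZMod ℓ) := by
    intro c _
    unfold cellCont
    push_cast
    ring_nf
  rw [Finset.prod_congr rfl hfac]
  -- contents are injective on S
  have hinj : ∀ x ∈ S, ∀ y ∈ S, cellCont x = cellCont y → x = y :=
    fun x hx y hy hxy => cont_inj hle h22 hx hy hxy
  -- S is nonempty
  have hSne : S.Nonempty := Finset.card_pos.mp (by omega)
  set T := S.image cellCont with hT
  have hTne : T.Nonempty := hSne.image _
  have hTcard : T.card = ℓ := by
    rw [hT, Finset.card_image_of_injOn (fun x hx y hy => hinj x hx y hy), hcard]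
  set m := T.min' hTne with hm
  set M := T.max' hTne with hMdef
  have hmM : m ≤ M := Finset.min'_le _ _ (T.max'_mem hTne)
  -- T = Icc m M
  have hTIcc : T = Finset.Icc m M := by
    apply Finset.Subset.antisymm
    · intro t ht
      exact Finset.mem_Icc.mpr ⟨Finset.min'_le _ _ ht, Finset.le_max' _ _ ht⟩
    · intro z hz
      rw [Finset.mem_Icc] at hz
      obtain ⟨cmin, hcmin, hcmin'⟩ := Finset.mem_image.mp (T.min'_mem hTne)
      obtain ⟨cmax, hcmax, hcmax'⟩ := Finset.mem_image.mp (T.max'_mem hTne)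
      obtain ⟨e, heS, hez⟩ := cont_between hcmin (hconn cmin hcmin cmax hcmax) z
        (by omega) (by omega)
      exact Finset.mem_image.mpr ⟨e, heS, hez⟩
  have hM : M = m + ℓ - 1 := by
    have := Int.card_Icc m M
    rw [← hTIcc, hTcard] at this
    omega
  -- product over S = product over T = product over Icc
  have himg := Finset.prod_image (s := S) (g := cellCont)
    (f := fun t : ℤ => Polynomial.X + Polynomial.C ((t : ZMod ℓ))) hinj
  rw [← himg, ← hT, hTIcc, hM]
  -- reindex Icc m (m+ℓ-1) by range ℓ
  have hre : ∏ t ∈ Finset.Icc m (m + ℓ - 1),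
      (Polynomial.X + Polynomial.C ((t : ZMod ℓ))) =
      ∏ p ∈ Finset.range ℓ,
      (Polynomial.X + Polynomial.C (((m : ZMod ℓ) + (p : ZMod ℓ)))) := by
    refine Finset.prod_nbij' (fun t => (t - m).toNat) (fun p => m + p) ?_ ?_ ?_ ?_ ?_
    · intro t ht
      rw [Finset.mem_Icc] at ht
      rw [Finset.mem_range]
      try dsimp only
      omega
    · intro p hp
      rw [Finset.mem_range] at hp
      rw [Finset.mem_Icc]
      try dsimp only
      omega
    · intro t ht
      rw [Finset.mem_Icc] at ht
      try dsimp only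
      omega
    · intro p hp
      rw [Finset.mem_range] at hp
      try dsimp only
      omega
    · intro t ht
      rw [Finset.mem_Icc] at ht
      try dsimp only
      have h2 : t = m + ((t - m).toNat : ℤ) := by omega
      have ht' : (t : ZMod ℓ) = (m : ZMod ℓ) + ((((t - m).toNat : ℕ)) : ZMod ℓ) := by
        calc (t : ZMod ℓ) = ((m + ((t - m).toNat : ℤ) : ℤ) : ZMod ℓ) := by rw [← h2]
        _ = _ := by push_cast; ring
      rw [ht']
  rw [hre]
  exact prod_range_translate (m : ZMod ℓ) (fun z => Polynomial.X + Polynomial.C z)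

theorem statement_14 (ℓ : ℕ) (hℓ : 1 ≤ ℓ) (lam lamc : YoungDiagram)
    (hcore : IsLCore ℓ lam lamc) :
    contentPoly ℓ lam =
      contentPoly ℓ lamc *
        ∏ p ∈ Finset.range ℓ,
          (Polynomial.X + Polynomial.C ((p : ZMod ℓ))) ^ ((lam.card - lamc.card) / ℓ) := by
  obtain ⟨hpath, -⟩ := hcore
  have key : ∃ k : ℕ, lam.card = lamc.card + k * ℓ ∧
      contentPoly ℓ lam = contentPoly ℓ lamc *
        (∏ p ∈ Finset.range ℓ, (Polynomial.X + Polynomial.C ((p : ZMod ℓ)))) ^ k := by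
    induction hpath with
    | refl => exact ⟨0, by simp⟩
    | @tail b c hab hbc ih =>
      obtain ⟨k, h1, h2⟩ := ih
      obtain ⟨hcard, hpoly⟩ := rimhook_step hℓ hbc
      refine ⟨k + 1, by rw [h1, hcard]; ring, ?_⟩
      rw [h2, hpoly]
      ring
  obtain ⟨k, hcard, hpoly⟩ := key
  have hw : (lam.card - lamc.card) / ℓ = k := by
    rw [hcard, Nat.add_sub_cancel_left, Nat.mul_div_cancel k hℓ]
  rw [hw, Finset.prod_pow, hpoly]
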